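/- Let ρ > 0 and 0 < δ < 1, and set ε = ρ + 2·√(ρ·log(1/δ)). Then for every α > 1, α·ρ + log(1/δ)/(α − 1) ≥ ε, with equality when α = 1 + √(log(1/δ)/ρ). -/

import Mathlib

open Real

theorem stmt_18 (ρ δ : ℝ) (hρ : 0 < ρ) (hδ : 0 < δ) (hδ1 : δ < 1) :
    (∀ α : ℝ, 1 < α →
      ρ + 2 * Real.sqrt (ρ * log (1 / δ)) ≤ α * ρ + log (1 / δ) / (α - 1)) ∧
    (1 + Real.sqrt (log (1 / δ) / ρ)) * ρ +
        log (1 / δ) / ((1 + Real.sqrt (log (1 / δ) / ρ)) - 1) =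
      ρ + 2 * Real.sqrt (ρ * log (1 / δ)) := by
  set L := log (1 / δ) with hLdef
  have hL : 0 < L := Real.log_pos ((one_lt_div hδ).mpr hδ1)
  have ha : 0 < Real.sqrt ρ := Real.sqrt_pos.mpr hρ
  have hb : 0 < Real.sqrt L := Real.sqrt_pos.mpr hL
  have ha2 : Real.sqrt ρ ^ 2 = ρ := Real.sq_sqrt hρ.le
  have hb2 : Real.sqrt L ^ 2 = L := Real.sq_sqrt hL.le
  have hmul : Real.sqrt (ρ * L) = Real.sqrt ρ * Real.sqrt L := Real.sqrt_mul hρ.le _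
  have hdiv : Real.sqrt (L / ρ) = Real.sqrt L / Real.sqrt ρ := Real.sqrt_div hL.le _
  constructor
  · intro α hα
    have ht : 0 < α - 1 := by linarith
    rw [hmul]
    have key : ∀ a b : ℝ, α * a ^ 2 + b ^ 2 / (α - 1) - (a ^ 2 + 2 * (a * b))
        = ((α - 1) * a - b) ^ 2 / (α - 1) := by
      intro a b
      field_simp
      ring
    have hk := key (Real.sqrt ρ) (Real.sqrt L)
    rw [ha2, hb2] at hk
    linarith [div_nonneg (sq_nonneg ((α - 1) * Real.sqrt ρ - Real.sqrt L)) ht.le]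
  · rw [hmul, hdiv]
    field_simp
    have hsub : Real.sqrt ρ + Real.sqrt L - Real.sqrt ρ = Real.sqrt L := by ring
    have h3 : ρ * L / Real.sqrt L = ρ * Real.sqrt L := by
      rw [div_eq_iff hb.ne']
      linear_combination (-ρ) * hb2
    rw [hsub, ha2, h3]
    linear_combination (-(2:ℝ) * Real.sqrt L) * ha2
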